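/- arXiv:2404.08791 — 2 statements merged into one kernel-verified Lean document; each statement's English description precedes it below -/
import Mathlib

section
/- There exist two finite MDP domains over the same states and actions, together with an expectation set, for which a human-sufficient reward function exists and yet every reward function that is human-sufficient is misspecified. Concretely, let S = {0, 1, 2}, A = {a1, a2}, γ ∈ (0,1), initial state s0 = 0. Let the human domain D^H have deterministic transitions: from state 0, action a1 leads to state 1 and action a2 leads to state 2; states 1 and 2 are absorbing (every action loops back to the same state). Let the robot domain D^R be identical except that from state 0 both actions a1 and a2 lead to state 2. Let the expectation set be E = {({1}, >, 0), ({2}, =, 0)}. Then: (i) there exists a reward function r : S × A → ℝ that is human-sufficient for D^H and E; and (ii) for every reward function r : S × A → ℝ, there exists an optimal occupancy x for (D^R, r) with x(1) = 0, so in particular every reward that is human-sufficient for D^H and E is misspecified with respect to D^R and E. -/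
open Finset

/-- A finite MDP domain `D = ⟨S, A, T, γ, s0⟩`. -/
structure MDPDomain (S A : Type) [Fintype S] [Fintype A] : Type where
  T : S → A → S → ℝ
  γ : ℝ
  s0 : S
  T_nonneg : ∀ s a s', 0 ≤ T s a s'
  T_sum : ∀ s a, ∑ s', T s a s' = 1
  γ_nonneg : 0 ≤ γ
  γ_lt_one : γ < 1

variable {S A : Type} [Fintype S] [Fintype A] [DecidableEq S]

/-- Membership in the occupancy polytope `F(D)`. -/
def InOcc (D : MDPDomain S A) (x : S → A → ℝ) : Prop :=
  (∀ s a, 0 ≤ x s a) ∧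
  ∀ s, ∑ a, x s a =
    (if s = D.s0 then (1 : ℝ) else 0) + D.γ * ∑ s', ∑ a', x s' a' * D.T s' a' s

/-- State occupancy `x(s) = ∑_a x(s,a)`. -/
def stateOcc (x : S → A → ℝ) (s : S) : ℝ := ∑ a, x s a

/-- Value of an occupancy under reward `r`. -/
def val (x : S → A → ℝ) (r : S → A → ℝ) : ℝ := ∑ s, ∑ a, x s a * r s a

/-- `x` is an optimal occupancy for `(D, r)`. -/
def IsOptimal (D : MDPDomain S A) (r : S → A → ℝ) (x : S → A → ℝ) : Prop :=
  InOcc D x ∧ ∀ y, InOcc D y → val y r ≤ val x r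

/-- Relational operators `{<, >, ≤, ≥, =}`. -/
inductive RelOp | lt | gt | le | ge | eq

def RelOp.holds : RelOp → ℝ → ℝ → Prop
  | .lt, a, b => a < b
  | .gt, a, b => a > b
  | .le, a, b => a ≤ b
  | .ge, a, b => a ≥ b
  | .eq, a, b => a = b

/-- An expectation element `e = ⟨S_e, O, k⟩`. -/
structure ExpElem (S : Type) [Fintype S] where
  Se : Finset S
  op : RelOp
  k : ℝ

/-- `x` satisfies the expectation element `e`. -/
def Satisfies (x : S → A → ℝ) (e : ExpElem S) : Prop :=
  e.op.holds (∑ s ∈ e.Se, stateOcc x s) e.k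

/-- `r` is human-sufficient for domain `D` and expectation set `E`. -/
def HumanSufficient (D : MDPDomain S A) (E : Set (ExpElem S)) (r : S → A → ℝ) : Prop :=
  ∀ x, IsOptimal D r x → ∀ e ∈ E, Satisfies x e

/-- `r` is misspecified with respect to domain `D` and expectation set `E`. -/
def Misspecified (D : MDPDomain S A) (E : Set (ExpElem S)) (r : S → A → ℝ) : Prop :=
  ∃ x, IsOptimal D r x ∧ ∃ e ∈ E, ¬ Satisfies x e

/-- Deterministic transition function induced by a next-state map. -/
def detT {S A : Type} [Fintype S] [Fintype A] [DecidableEq S] (f : S → A → S) :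
    S → A → S → ℝ := fun s a s' => if s' = f s a then 1 else 0

lemma detT_nonneg {S A : Type} [Fintype S] [Fintype A] [DecidableEq S] (f : S → A → S) :
    ∀ s a s', 0 ≤ detT f s a s' := by
  intro s a s'; unfold detT; split <;> norm_num

lemma detT_sum {S A : Type} [Fintype S] [Fintype A] [DecidableEq S] (f : S → A → S) :
    ∀ s a, ∑ s', detT f s a s' = 1 := by
  intro s a; simp [detT]

/-- The human domain: from state 0, action 0 leads to state 1 and action 1 leads to
state 2; states 1 and 2 are absorbing. -/
def DH (γ : ℝ) (h0 : 0 < γ) (h1 : γ < 1) : MDPDomain (Fin 3) (Fin 2) where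
  T := detT (fun s a => if s = 0 then (if a = 0 then 1 else 2) else s)
  γ := γ
  s0 := 0
  T_nonneg := detT_nonneg _
  T_sum := detT_sum _
  γ_nonneg := h0.le
  γ_lt_one := h1

/-- The robot domain: identical, except both actions from state 0 lead to state 2. -/
def DR (γ : ℝ) (h0 : 0 < γ) (h1 : γ < 1) : MDPDomain (Fin 3) (Fin 2) where
  T := detT (fun s _ => if s = 0 then 2 else s)
  γ := γ
  s0 := 0
  T_nonneg := detT_nonneg _
  T_sum := detT_sum _
  γ_nonneg := h0.le
  γ_lt_one := h1

/-- The expectation set E = {({1}, >, 0), ({2}, =, 0)}. -/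
def Eset : Set (ExpElem (Fin 3)) := {⟨{1}, .gt, 0⟩, ⟨{2}, .eq, 0⟩}

lemma occDH (γ : ℝ) (h0 : 0 < γ) (h1 : γ < 1) (x : Fin 3 → Fin 2 → ℝ)
    (h : InOcc (DH γ h0 h1) x) :
    x 0 0 + x 0 1 = 1 ∧
    x 1 0 + x 1 1 = γ * (x 0 0 + (x 1 0 + x 1 1)) ∧
    x 2 0 + x 2 1 = γ * (x 0 1 + (x 2 0 + x 2 1)) := by
  obtain ⟨hn, hf⟩ := h
  have e0 := hf 0; have e1 := hf 1; have e2 := hf 2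
  simp [DH, detT, Fin.sum_univ_three, Fin.sum_univ_two] at e0 e1 e2
  refine ⟨by linarith, by linarith, by linarith⟩

lemma occDR (γ : ℝ) (h0 : 0 < γ) (h1 : γ < 1) (x : Fin 3 → Fin 2 → ℝ)
    (h : InOcc (DR γ h0 h1) x) :
    x 0 0 + x 0 1 = 1 ∧
    x 1 0 + x 1 1 = γ * (x 1 0 + x 1 1) ∧
    x 2 0 + x 2 1 = γ * (x 0 0 + x 0 1 + (x 2 0 + x 2 1)) := by
  obtain ⟨hn, hf⟩ := h
  have e0 := hf 0; have e1 := hf 1; have e2 := hf 2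
  simp [DR, detT, Fin.sum_univ_three, Fin.sum_univ_two] at e0 e1 e2
  refine ⟨by linarith, by linarith, by linarith⟩

noncomputable def xH (γ : ℝ) : Fin 3 → Fin 2 → ℝ := fun s a =>
  if s = 0 ∧ a = 0 then 1 else if s = 1 ∧ a = 0 then γ / (1 - γ) else 0

lemma xH_occ (γ : ℝ) (h0 : 0 < γ) (h1 : γ < 1) : InOcc (DH γ h0 h1) (xH γ) := by
  have hγ : (0 : ℝ) < 1 - γ := by linarith
  constructor
  · intro s a
    unfold xH
    split_ifs <;> positivity
  · intro s
    fin_cases s <;>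
      simp [DH, detT, xH, Fin.sum_univ_three, Fin.sum_univ_two] <;> field_simp <;> ring

noncomputable def xR (γ : ℝ) (b c : Fin 2) : Fin 3 → Fin 2 → ℝ := fun s a =>
  if s = 0 then (if a = b then 1 else 0)
  else if s = 2 then (if a = c then γ / (1 - γ) else 0) else 0

lemma xR_occ (γ : ℝ) (h0 : 0 < γ) (h1 : γ < 1) (b c : Fin 2) :
    InOcc (DR γ h0 h1) (xR γ b c) := by
  have hγ : (0 : ℝ) < 1 - γ := by linarith
  constructor
  · intro s a
    unfold xR
    split_ifs <;> positivity
  · intro s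
    fin_cases s <;> fin_cases b <;> fin_cases c <;>
      simp [DR, detT, xR, Fin.sum_univ_three, Fin.sum_univ_two] <;> field_simp <;> ring
lemma val_expand (x r : Fin 3 → Fin 2 → ℝ) :
    val x r = x 0 0 * r 0 0 + x 0 1 * r 0 1 + (x 1 0 * r 1 0 + x 1 1 * r 1 1)
      + (x 2 0 * r 2 0 + x 2 1 * r 2 1) := by
  simp [_root_.val, Fin.sum_univ_three, Fin.sum_univ_two]

lemma val_xR (γ : ℝ) (b c : Fin 2) (r : Fin 3 → Fin 2 → ℝ) :
    val (xR γ b c) r = r 0 b + (γ / (1 - γ)) * r 2 c := by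
  fin_cases b <;> fin_cases c <;> (simp [val_expand, xR]; try ring)

lemma partII (γ : ℝ) (h0 : 0 < γ) (h1 : γ < 1) (r : Fin 3 → Fin 2 → ℝ) :
    ∃ x : Fin 3 → Fin 2 → ℝ, IsOptimal (DR γ h0 h1) r x ∧ stateOcc x 1 = 0 := by
  have hγ : (0 : ℝ) < 1 - γ := by linarith
  obtain ⟨b, hb⟩ : ∃ b : Fin 2, max (r 0 0) (r 0 1) = r 0 b := by
    rcases max_cases (r 0 0) (r 0 1) with ⟨h, _⟩ | ⟨h, _⟩
    exacts [⟨0, h⟩, ⟨1, h⟩]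
  obtain ⟨c, hc⟩ : ∃ c : Fin 2, max (r 2 0) (r 2 1) = r 2 c := by
    rcases max_cases (r 2 0) (r 2 1) with ⟨h, _⟩ | ⟨h, _⟩
    exacts [⟨0, h⟩, ⟨1, h⟩]
  refine ⟨xR γ b c, ⟨xR_occ γ h0 h1 b c, ?_⟩, ?_⟩
  · intro y hy
    obtain ⟨hy1, hy2, hy3⟩ := occDR γ h0 h1 y hy
    have hn := hy.1
    have hz0 : y 1 0 = 0 := by nlinarith [hn 1 0, hn 1 1]
    have hz1 : y 1 1 = 0 := by nlinarith [hn 1 0, hn 1 1]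
    have h2 : y 2 0 + y 2 1 = γ / (1 - γ) := by
      field_simp; nlinarith
    rw [val_expand, val_xR, ← hb, ← hc, hz0, hz1]
    have b00 := mul_le_mul_of_nonneg_left (le_max_left (r 0 0) (r 0 1)) (hn 0 0)
    have b01 := mul_le_mul_of_nonneg_left (le_max_right (r 0 0) (r 0 1)) (hn 0 1)
    have b20 := mul_le_mul_of_nonneg_left (le_max_left (r 2 0) (r 2 1)) (hn 2 0)
    have b21 := mul_le_mul_of_nonneg_left (le_max_right (r 2 0) (r 2 1)) (hn 2 1)
    have hs0 : y 0 0 * max (r 0 0) (r 0 1) + y 0 1 * max (r 0 0) (r 0 1)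
        = max (r 0 0) (r 0 1) := by rw [← add_mul, hy1, one_mul]
    have hs2 : y 2 0 * max (r 2 0) (r 2 1) + y 2 1 * max (r 2 0) (r 2 1)
        = γ / (1 - γ) * max (r 2 0) (r 2 1) := by rw [← add_mul, h2]
    linarith
  · simp [stateOcc, xR, Fin.sum_univ_two]

theorem no_reward_exists (γ : ℝ) (h0 : 0 < γ) (h1 : γ < 1) :
    (∃ r : Fin 3 → Fin 2 → ℝ, HumanSufficient (DH γ h0 h1) Eset r) ∧
    (∀ r : Fin 3 → Fin 2 → ℝ,
      ∃ x : Fin 3 → Fin 2 → ℝ, IsOptimal (DR γ h0 h1) r x ∧ stateOcc x 1 = 0) ∧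
    (∀ r : Fin 3 → Fin 2 → ℝ,
      HumanSufficient (DH γ h0 h1) Eset r → Misspecified (DR γ h0 h1) Eset r) := by
  have hγ : (0 : ℝ) < 1 - γ := by linarith
  refine ⟨?_, partII γ h0 h1, ?_⟩
  · refine ⟨fun s a => if s = 0 ∧ a = 0 then 1 else 0, ?_⟩
    intro x ⟨hx, hopt⟩ e he
    obtain ⟨hx1, hx2, hx3⟩ := occDH γ h0 h1 x hx
    have hn := hx.1
    have hle := hopt (xH γ) (xH_occ γ h0 h1)
    have hvx : val x (fun s a => if s = 0 ∧ a = 0 then 1 else 0) = x 0 0 := by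
      rw [val_expand]
      norm_num [show (1 : Fin 3) ≠ 0 by decide, show (2 : Fin 3) ≠ 0 by decide,
        show (1 : Fin 2) ≠ 0 by decide]
    have hvH : val (xH γ) (fun s a => if s = 0 ∧ a = 0 then 1 else 0) = 1 := by
      rw [val_expand]
      norm_num [xH, show (1 : Fin 3) ≠ 0 by decide, show (2 : Fin 3) ≠ 0 by decide,
        show (1 : Fin 2) ≠ 0 by decide]
    rw [hvx, hvH] at hle
    have h00 : x 0 0 = 1 := le_antisymm (by nlinarith [hn 0 1]) hle
    have h01 : x 0 1 = 0 := by linarith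
    have hx1pos : 0 < x 1 0 + x 1 1 := by
      have hh : (1 - γ) * (x 1 0 + x 1 1) = γ := by nlinarith
      nlinarith
    have hx2z : x 2 0 + x 2 1 = 0 := by nlinarith
    simp only [Eset, Set.mem_insert_iff, Set.mem_singleton_iff] at he
    rcases he with rfl | rfl
    · simpa [Satisfies, RelOp.holds, stateOcc, Fin.sum_univ_two] using hx1pos
    · simpa [Satisfies, RelOp.holds, stateOcc, Fin.sum_univ_two] using hx2z
  · intro r _
    obtain ⟨x, hx, h1x⟩ := partII γ h0 h1 r
    refine ⟨x, hx, ⟨{1}, .gt, 0⟩, by simp [Eset], ?_⟩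
    simp [Satisfies, RelOp.holds, h1x]
end

section
/- For any finite MDP domain D and any deterministic stationary policy π : S → A, there exists exactly one element x of the occupancy polytope F(D) with x(s,a) = 0 for every state s and every action a ≠ π(s). (In particular, the occupancy polytope F(D) is nonempty.) -/
open Finset

variable {S A : Type} [Fintype S] [Fintype A] [DecidableEq S]

/-- n-step state distribution under policy `π`. -/
noncomputable def occIter {S A : Type} [Fintype S] [Fintype A] [DecidableEq S]
    (D : MDPDomain S A) (π : S → A) : ℕ → S → ℝ
  | 0, s => if s = D.s0 then 1 else 0
  | n+1, s => ∑ s', occIter D π n s' * D.T s' (π s') s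

lemma occIter_nonneg {S A : Type} [Fintype S] [Fintype A] [DecidableEq S]
    (D : MDPDomain S A) (π : S → A) : ∀ n s, 0 ≤ occIter D π n s := by
  intro n
  induction n with
  | zero => intro s; simp only [occIter]; split <;> norm_num
  | succ n ih =>
    intro s
    simp only [occIter]
    exact Finset.sum_nonneg fun s' _ => mul_nonneg (ih s') (D.T_nonneg _ _ _)

lemma occIter_sum {S A : Type} [Fintype S] [Fintype A] [DecidableEq S]
    (D : MDPDomain S A) (π : S → A) : ∀ n, ∑ s, occIter D π n s = 1 := by
  intro n
  induction n with
  | zero => simp [occIter]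
  | succ n ih =>
    simp only [occIter]
    rw [Finset.sum_comm]
    calc ∑ s', ∑ s, occIter D π n s' * D.T s' (π s') s
        = ∑ s', occIter D π n s' * ∑ s, D.T s' (π s') s := by
          simp [Finset.mul_sum]
      _ = 1 := by simp [D.T_sum, ih]

lemma occIter_le_one {S A : Type} [Fintype S] [Fintype A] [DecidableEq S]
    (D : MDPDomain S A) (π : S → A) (n : ℕ) (s : S) : occIter D π n s ≤ 1 := by
  have := Finset.single_le_sum (f := fun s => occIter D π n s)
    (fun s _ => occIter_nonneg D π n s) (Finset.mem_univ s)
  rw [occIter_sum D π n] at this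
  exact this

lemma occSummable {S A : Type} [Fintype S] [Fintype A] [DecidableEq S]
    (D : MDPDomain S A) (π : S → A) (s : S) :
    Summable (fun n => D.γ ^ n * occIter D π n s) := by
  apply Summable.of_nonneg_of_le
    (fun n => mul_nonneg (pow_nonneg D.γ_nonneg n) (occIter_nonneg D π n s))
    (fun n => ?_) (summable_geometric_of_lt_one D.γ_nonneg D.γ_lt_one)
  calc D.γ ^ n * occIter D π n s ≤ D.γ ^ n * 1 :=
        mul_le_mul_of_nonneg_left (occIter_le_one D π n s) (pow_nonneg D.γ_nonneg n)
    _ = D.γ ^ n := mul_one _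

/-- The occupancy of `π` in state `s`. -/
noncomputable def occMu {S A : Type} [Fintype S] [Fintype A] [DecidableEq S]
    (D : MDPDomain S A) (π : S → A) (s : S) : ℝ :=
  ∑' n, D.γ ^ n * occIter D π n s

lemma occMu_eq {S A : Type} [Fintype S] [Fintype A] [DecidableEq S]
    (D : MDPDomain S A) (π : S → A) (s : S) :
    occMu D π s = (if s = D.s0 then (1 : ℝ) else 0)
      + D.γ * ∑ s', occMu D π s' * D.T s' (π s') s := by
  rw [occMu, Summable.tsum_eq_zero_add (occSummable D π s)]
  have h0 : D.γ ^ 0 * occIter D π 0 s = (if s = D.s0 then (1 : ℝ) else 0) := by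
    simp [occIter]
  rw [h0]
  congr 1
  have hterm : ∀ n : ℕ, D.γ ^ (n + 1) * occIter D π (n + 1) s
      = D.γ * ∑ s', (D.γ ^ n * occIter D π n s') * D.T s' (π s') s := by
    intro n
    simp only [occIter, pow_succ, Finset.mul_sum]
    apply Finset.sum_congr rfl
    intro s' _
    ring
  calc ∑' n, D.γ ^ (n + 1) * occIter D π (n + 1) s
      = ∑' n, D.γ * ∑ s', (D.γ ^ n * occIter D π n s') * D.T s' (π s') s := by
        exact tsum_congr hterm
    _ = D.γ * ∑' n, ∑ s', (D.γ ^ n * occIter D π n s') * D.T s' (π s') s :=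
        tsum_mul_left
    _ = D.γ * ∑ s', ∑' n, (D.γ ^ n * occIter D π n s') * D.T s' (π s') s := by
        rw [Summable.tsum_finsetSum (fun s' _ => (occSummable D π s').mul_right _)]
    _ = D.γ * ∑ s', occMu D π s' * D.T s' (π s') s := by
        congr 1
        apply Finset.sum_congr rfl
        intro s' _
        rw [(occSummable D π s').tsum_mul_right]
        rfl

lemma homogeneous_zero {S A : Type} [Fintype S] [Fintype A] [DecidableEq S]
    (D : MDPDomain S A) (π : S → A) (d : S → ℝ)
    (h : ∀ s, d s = D.γ * ∑ s', d s' * D.T s' (π s') s) : ∀ s, d s = 0 := by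
  have key : ∑ s, |d s| ≤ D.γ * ∑ s, |d s| := by
    calc ∑ s, |d s| = ∑ s, |D.γ * ∑ s', d s' * D.T s' (π s') s| := by
          apply Finset.sum_congr rfl; intro s _; rw [← h s]
      _ ≤ ∑ s, D.γ * ∑ s', |d s'| * D.T s' (π s') s := by
          apply Finset.sum_le_sum
          intro s _
          rw [abs_mul, abs_of_nonneg D.γ_nonneg]
          apply mul_le_mul_of_nonneg_left _ D.γ_nonneg
          calc |∑ s', d s' * D.T s' (π s') s| ≤ ∑ s', |d s' * D.T s' (π s') s| :=
                Finset.abs_sum_le_sum_abs _ _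
            _ = ∑ s', |d s'| * D.T s' (π s') s := by
                apply Finset.sum_congr rfl
                intro s' _
                rw [abs_mul, abs_of_nonneg (D.T_nonneg _ _ _)]
      _ = D.γ * ∑ s', |d s'| * ∑ s, D.T s' (π s') s := by
          rw [← Finset.mul_sum, Finset.sum_comm]
          simp [Finset.mul_sum]
      _ = D.γ * ∑ s', |d s'| := by simp [D.T_sum]
  have hnn : 0 ≤ ∑ s, |d s| := Finset.sum_nonneg fun s _ => abs_nonneg _
  have hzero : ∑ s, |d s| = 0 := by nlinarith [D.γ_lt_one]
  intro s
  have := (Finset.sum_eq_zero_iff_of_nonneg (fun s _ => abs_nonneg (d s))).mp hzero s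
    (Finset.mem_univ s)
  exact abs_eq_zero.mp this

theorem deterministic_policy_unique_occupancy
    {S A : Type} [Fintype S] [Fintype A] [DecidableEq S] [DecidableEq A]
    (D : MDPDomain S A) (π : S → A) :
    ∃! x : S → A → ℝ, InOcc D x ∧ ∀ s, ∀ a, a ≠ π s → x s a = 0 := by
  classical
  -- the candidate occupancy
  set x : S → A → ℝ := fun s a => if a = π s then occMu D π s else 0 with hx
  have hμnn : ∀ s, 0 ≤ occMu D π s := fun s =>
    tsum_nonneg fun n => mul_nonneg (pow_nonneg D.γ_nonneg n) (occIter_nonneg D π n s)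
  have hxsum : ∀ s, ∑ a, x s a = occMu D π s := by
    intro s
    simp [hx]
  have hxinner : ∀ (s s' : S), ∑ a', x s' a' * D.T s' a' s
      = occMu D π s' * D.T s' (π s') s := by
    intro s s'
    rw [Finset.sum_eq_single (π s')]
    · simp [hx]
    · intro a _ ha; simp [hx, ha]
    · intro h; exact absurd (Finset.mem_univ _) h
  have hxocc : InOcc D x := by
    constructor
    · intro s a
      simp only [hx]
      split
      · exact hμnn s
      · exact le_refl 0
    · intro s
      rw [hxsum s]
      have : ∑ s', ∑ a', x s' a' * D.T s' a' s = ∑ s', occMu D π s' * D.T s' (π s') s :=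
        Finset.sum_congr rfl fun s' _ => hxinner s s'
      rw [this]
      exact occMu_eq D π s
  refine ⟨x, ⟨hxocc, ?_⟩, ?_⟩
  · intro s a ha; simp [hx, ha]
  · rintro y ⟨hyocc, hy0⟩
    -- state occupancies agree
    have hysum : ∀ s, ∑ a, y s a = y s (π s) := by
      intro s
      rw [Finset.sum_eq_single (π s)]
      · intro a _ ha; exact hy0 s a ha
      · intro h; exact absurd (Finset.mem_univ _) h
    have hyinner : ∀ (s s' : S), ∑ a', y s' a' * D.T s' a' s
        = (∑ a, y s' a) * D.T s' (π s') s := by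
      intro s s'
      rw [hysum s', Finset.sum_eq_single (π s')]
      · intro a _ ha; rw [hy0 s' a ha, zero_mul]
      · intro h; exact absurd (Finset.mem_univ _) h
    have hνeq : ∀ s, (∑ a, y s a) = (if s = D.s0 then (1 : ℝ) else 0)
        + D.γ * ∑ s', (∑ a, y s' a) * D.T s' (π s') s := by
      intro s
      rw [hyocc.2 s]
      congr 1
      congr 1
      exact Finset.sum_congr rfl fun s' _ => hyinner s s'
    have hd : ∀ s, (∑ a, y s a) - occMu D π s
        = D.γ * ∑ s', ((∑ a, y s' a) - occMu D π s') * D.T s' (π s') s := by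
      intro s
      have h1 := hνeq s
      have h2 := occMu_eq D π s
      have : ∑ s', ((∑ a, y s' a) - occMu D π s') * D.T s' (π s') s
          = (∑ s', (∑ a, y s' a) * D.T s' (π s') s)
            - ∑ s', occMu D π s' * D.T s' (π s') s := by
        rw [← Finset.sum_sub_distrib]
        exact Finset.sum_congr rfl fun s' _ => by ring
      rw [this]
      linarith [h1, h2]
    have hzero := homogeneous_zero D π _ hd
    have hν : ∀ s, ∑ a, y s a = occMu D π s := by
      intro s
      have := hzero s
      linarith
    funext s a
    by_cases ha : a = π s
    · subst ha
      rw [← hysum s, hν s]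
      simp [hx]
    · rw [hy0 s a ha]
      simp [hx, ha]
end
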